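/- Let E : ℝⁿ → ℝ be twice continuously differentiable with gradient g, let U ⊆ ℝⁿ be an open corridor for E, let h > 0 and θ ∈ U. Define the fourth-order Runge–Kutta (RK4) step for the gradient flow: k₁ = -g(θ), k₂ = -g(θ + (h/2) • k₁), k₃ = -g(θ + (h/2) • k₂), k₄ = -g(θ + h • k₃), and θ' = θ + (h/6) • (k₁ + 2k₂ + 2k₃ + k₄). If the segments {θ + s • k₁ : s ∈ [0, h/2]}, {θ + s • k₂ : s ∈ [0, h/2]}, and {θ + s • k₃ : s ∈ [0, h]} lie in U, then k₁ = k₂ = k₃ = k₄ = -g(θ) and the RK4 step coincides with the gradient descent step: θ' = θ - h • g(θ). -/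

import Mathlib

open Set Filter Topology

/-- An open set `U ⊆ ℝⁿ` is a *corridor* for `E` if every solution of the gradient flow
`θ'(t) = -∇E(θ(t))` whose image lies in `U` is a straight line traveled at constant speed,
i.e. satisfies `θ(t) = θ(a) + (t - a) • v` for some fixed vector `v`. -/
def IsCorridor {n : ℕ} (E : EuclideanSpace ℝ (Fin n) → ℝ)
    (U : Set (EuclideanSpace ℝ (Fin n))) : Prop :=
  ∀ (a b : ℝ), a ≤ b → ∀ θ : ℝ → EuclideanSpace ℝ (Fin n),
    (∀ t ∈ Set.Icc a b, HasDerivAt θ (-(gradient E (θ t))) t) →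
    (∀ t ∈ Set.Icc a b, θ t ∈ U) →
    ∃ v : EuclideanSpace ℝ (Fin n), ∀ t ∈ Set.Icc a b, θ t = θ a + (t - a) • v

lemma gradient_contDiff_one {n : ℕ} (E : EuclideanSpace ℝ (Fin n) → ℝ)
    (hE : ContDiff ℝ 2 E) : ContDiff ℝ 1 (gradient E) := by
  have h1 : ContDiff ℝ 1 (fderiv ℝ E) := hE.fderiv_right (by norm_num)
  exact ((InnerProductSpace.toDual ℝ
    (EuclideanSpace ℝ (Fin n))).symm.toLinearIsometry.contDiff).comp h1

/-- Key lemma: if `g p = -k` and the segment `p + s•k`, `s ∈ [0,T]`, lies in the corridor `U`,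
then the gradient is constantly `-k` along the segment. -/
lemma segment_gradient_const {n : ℕ}
    (E : EuclideanSpace ℝ (Fin n) → ℝ) (hE : ContDiff ℝ 2 E)
    (U : Set (EuclideanSpace ℝ (Fin n))) (hU : IsOpen U) (hcor : IsCorridor E U)
    (p k : EuclideanSpace ℝ (Fin n)) (hpk : gradient E p = -k)
    (T : ℝ) (hT : 0 ≤ T)
    (hseg : ∀ s ∈ Set.Icc (0:ℝ) T, p + s • k ∈ U) :
    ∀ s ∈ Set.Icc (0:ℝ) T, gradient E (p + s • k) = -k := by
  have hg : ContDiff ℝ 1 (gradient E) := gradient_contDiff_one E hE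
  set φ : ℝ → EuclideanSpace ℝ (Fin n) := fun s => gradient E (p + s • k) with hφdef
  have hφc : Continuous φ :=
    hg.continuous.comp (continuous_const.add (continuous_id.smul continuous_const))
  have hφ0 : φ 0 = -k := by simp [hφdef, hpk]
  set S : Set ℝ := {t ∈ Set.Icc (0:ℝ) T | ∀ s ∈ Set.Icc (0:ℝ) t, φ s = -k} with hSdef
  have h0S : (0:ℝ) ∈ S := by
    refine ⟨⟨le_refl _, hT⟩, fun s hs => ?_⟩
    have : s = 0 := le_antisymm hs.2 hs.1
    simpa [this] using hφ0
  have hSne : S.Nonempty := ⟨0, h0S⟩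
  have hSbdd : BddAbove S := ⟨T, fun t ht => ht.1.2⟩
  set τ : ℝ := sSup S with hτdef
  have hτ0 : 0 ≤ τ := le_csSup hSbdd h0S
  have hτT : τ ≤ T := csSup_le hSne fun t ht => ht.1.2
  -- gradient is -k on [0, τ]
  have hτS : ∀ s ∈ Set.Icc (0:ℝ) τ, φ s = -k := by
    intro s hs
    rcases lt_or_eq_of_le hs.2 with hlt | heq
    · obtain ⟨t, htS, hst⟩ := exists_lt_of_lt_csSup hSne hlt
      exact htS.2 s ⟨hs.1, le_of_lt hst⟩
    · subst heq
      rcases eq_or_lt_of_le hs.1 with h0 | h0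
      · simpa [← h0] using hφ0
      · -- s = τ > 0 : take the limit from the left
        haveI : (𝓝[Set.Ico 0 τ] τ).NeBot := by
          apply mem_closure_iff_nhdsWithin_neBot.mp
          rw [closure_Ico h0.ne]
          exact ⟨hs.1, le_refl _⟩
        have h1 : Filter.Tendsto φ (𝓝[Set.Ico 0 τ] τ) (𝓝 (φ τ)) :=
          (hφc.tendsto τ).mono_left nhdsWithin_le_nhds
        have h2 : Filter.Tendsto φ (𝓝[Set.Ico 0 τ] τ) (𝓝 (-k)) := by
          refine Filter.Tendsto.congr' ?_ tendsto_const_nhds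
          filter_upwards [self_mem_nhdsWithin] with u hu
          obtain ⟨t, htS, hut⟩ := exists_lt_of_lt_csSup hSne hu.2
          exact (htS.2 u ⟨hu.1, le_of_lt hut⟩).symm
        exact tendsto_nhds_unique h1 h2
  -- show τ = T
  by_contra hcon
  push_neg at hcon
  obtain ⟨s₀, hs₀, hne⟩ := hcon
  have hτltT : τ < T := by
    rcases lt_or_ge τ T with h | h
    · exact h
    · exact absurd (hτS s₀ ⟨hs₀.1, by rw [le_antisymm hτT h]; exact hs₀.2⟩) hne
  -- local ODE solution at q = p + τ • k
  set q : EuclideanSpace ℝ (Fin n) := p + τ • k with hqdef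
  have hqU : q ∈ U := hseg τ ⟨hτ0, hτT⟩
  have hgq : gradient E q = -k := hτS τ ⟨hτ0, le_refl _⟩
  obtain ⟨f, hf0, ε, hε, hf⟩ :=
    ContDiffAt.exists_forall_mem_closedBall_exists_eq_forall_mem_Ioo_hasDerivAt₀ (x₀ := q)
      (f := fun x => -(gradient E x)) (hg.neg).contDiffAt τ
  have hfτmem : τ ∈ Set.Ioo (τ - ε) (τ + ε) := ⟨by linarith, by linarith⟩
  have hfc : ContinuousAt f τ := (hf τ hfτmem).continuousAt
  have hUnb : U ∈ 𝓝 (f τ) := hU.mem_nhds (hf0 ▸ hqU)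
  obtain ⟨δ, hδ, hball⟩ := Metric.mem_nhds_iff.mp (hfc.preimage_mem_nhds hUnb)
  set ε' : ℝ := min (min (ε/2) (δ/2)) (T - τ) with hε'def
  have hε' : 0 < ε' := by
    apply lt_min (lt_min (by linarith) (by linarith)) (by linarith)
  set b : ℝ := τ + ε' with hbdef
  have hτb : τ < b := by simp [hbdef]; linarith
  have hIccsub : ∀ t ∈ Set.Icc τ b, t ∈ Set.Ioo (τ - ε) (τ + ε) := by
    intro t ht
    have h1 : ε' ≤ ε/2 := (min_le_left _ _).trans (min_le_left _ _)
    constructor <;> [linarith [ht.1]; linarith [ht.2]]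
  have hderiv : ∀ t ∈ Set.Icc τ b, HasDerivAt f (-(gradient E (f t))) t :=
    fun t ht => hf t (hIccsub t ht)
  have hmemU : ∀ t ∈ Set.Icc τ b, f t ∈ U := by
    intro t ht
    apply hball
    have h1 : ε' ≤ δ/2 := (min_le_left _ _).trans (min_le_right _ _)
    simp only [Metric.mem_ball, Real.dist_eq]
    rw [abs_lt]
    constructor <;> [linarith [ht.1]; linarith [ht.2]]
  obtain ⟨v, hv⟩ := hcor τ b (le_of_lt hτb) f hderiv hmemU
  -- identify f with the line on the interior, and compute gradient there
  have hline : ∀ t ∈ Set.Ioo τ b, gradient E (f t) = -v := by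
    intro t ht
    have hnb : Set.Icc τ b ∈ 𝓝 t := Icc_mem_nhds ht.1 ht.2
    have hLd : HasDerivAt (fun u => f τ + (u - τ) • v) v t := by
      have h1 : HasDerivAt (fun u : ℝ => (u - τ) • v) ((1:ℝ) • v) t :=
        ((hasDerivAt_id t).sub_const τ).smul_const v
      simpa using h1.const_add (f τ)
    have hfd : HasDerivAt f v t := by
      apply hLd.congr_of_eventuallyEq
      filter_upwards [hnb] with u hu
      exact hv u hu
    have huniq := (hderiv t (Set.Ioo_subset_Icc_self ht)).unique hfd
    rw [← huniq, neg_neg]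
  -- identify v = k by taking the limit at τ from the right
  haveI : (𝓝[Set.Ioo τ b] τ).NeBot := by
    apply mem_closure_iff_nhdsWithin_neBot.mp
    rw [closure_Ioo (ne_of_lt hτb)]
    exact ⟨le_refl _, le_of_lt hτb⟩
  have hvk : v = k := by
    have h1 : Filter.Tendsto (fun t => gradient E (f t)) (𝓝[Set.Ioo τ b] τ)
        (𝓝 (gradient E (f τ))) :=
      ((hg.continuous.continuousAt).comp hfc).tendsto.mono_left nhdsWithin_le_nhds
    have h2 : Filter.Tendsto (fun t => gradient E (f t)) (𝓝[Set.Ioo τ b] τ) (𝓝 (-v)) := by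
      refine Filter.Tendsto.congr' ?_ tendsto_const_nhds
      filter_upwards [self_mem_nhdsWithin] with u hu
      exact (hline u hu).symm
    have h3 : gradient E (f τ) = -v := tendsto_nhds_unique h1 h2
    have h4 : gradient E (f τ) = -k := by rw [hf0]; exact hgq
    have h5 := h3.symm.trans h4
    exact neg_inj.mp h5
  -- hence the gradient is -k slightly beyond τ
  have hbeyond : ∀ t ∈ Set.Ioo τ b, φ t = -k := by
    intro t ht
    have hft : f t = p + t • k := by
      rw [hv t (Set.Ioo_subset_Icc_self ht), hf0, hvk, hqdef]
      rw [add_assoc, ← add_smul]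
      ring_nf
    have := hline t ht
    rw [hft, hvk] at this
    exact this
  -- contradiction with τ = sSup S
  have ht'S : τ + ε'/2 ∈ S := by
    have hTτ : ε' ≤ T - τ := min_le_right _ _
    constructor
    · exact ⟨by linarith, by linarith⟩
    · intro s hs
      rcases le_or_gt s τ with hle | hlt
      · exact hτS s ⟨hs.1, hle⟩
      · refine hbeyond s ⟨hlt, ?_⟩
        have h2 : s ≤ τ + ε'/2 := hs.2
        show s < τ + ε'
        linarith
  have : τ + ε'/2 ≤ τ := le_csSup hSbdd ht'S
  linarith

/-- **RK4 in corridors.** Let `U` be an open corridor for `E`, `h > 0` and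
`θ ∈ U`. Define the RK4 step for the gradient flow: `k₁ = -g(θ)`,
`k₂ = -g(θ + (h/2) • k₁)`, `k₃ = -g(θ + (h/2) • k₂)`, `k₄ = -g(θ + h • k₃)`, and
`θ' = θ + (h/6) • (k₁ + 2k₂ + 2k₃ + k₄)`. If the segments `{θ + s • k₁ : s ∈ [0, h/2]}`,
`{θ + s • k₂ : s ∈ [0, h/2]}`, and `{θ + s • k₃ : s ∈ [0, h]}` lie in `U`, then
`k₁ = k₂ = k₃ = k₄ = -g(θ)` and the RK4 step coincides with the gradient descent step:
`θ' = θ - h • g(θ)`. -/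
theorem rk4_in_corridor {n : ℕ}
    (E : EuclideanSpace ℝ (Fin n) → ℝ) (hE : ContDiff ℝ 2 E)
    (U : Set (EuclideanSpace ℝ (Fin n))) (hU : IsOpen U) (hcor : IsCorridor E U)
    (h : ℝ) (hh : 0 < h)
    (θ : EuclideanSpace ℝ (Fin n)) (hθ : θ ∈ U)
    (k1 k2 k3 k4 : EuclideanSpace ℝ (Fin n))
    (hk1 : k1 = -(gradient E θ))
    (hk2 : k2 = -(gradient E (θ + (h / 2) • k1)))
    (hk3 : k3 = -(gradient E (θ + (h / 2) • k2)))
    (hk4 : k4 = -(gradient E (θ + h • k3)))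
    (hseg1 : ∀ s ∈ Set.Icc (0 : ℝ) (h / 2), θ + s • k1 ∈ U)
    (hseg2 : ∀ s ∈ Set.Icc (0 : ℝ) (h / 2), θ + s • k2 ∈ U)
    (hseg3 : ∀ s ∈ Set.Icc (0 : ℝ) h, θ + s • k3 ∈ U) :
    k1 = -(gradient E θ) ∧ k2 = -(gradient E θ) ∧
    k3 = -(gradient E θ) ∧ k4 = -(gradient E θ) ∧
    θ + (h / 6) • (k1 + (2 : ℝ) • k2 + (2 : ℝ) • k3 + k4) = θ - h • gradient E θ := by
  have hg1 : gradient E θ = -k1 := by rw [hk1, neg_neg]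
  have h2pos : (0:ℝ) ≤ h / 2 := by linarith
  have hc1 := segment_gradient_const E hE U hU hcor θ k1 hg1 (h/2) h2pos hseg1
  have hk2k1 : k2 = k1 := by
    rw [hk2, hc1 (h/2) ⟨h2pos, le_refl _⟩, neg_neg]
  have hg2 : gradient E θ = -k2 := by rw [hk2k1]; exact hg1
  have hc2 := segment_gradient_const E hE U hU hcor θ k2 hg2 (h/2) h2pos hseg2
  have hk3k2 : k3 = k2 := by
    rw [hk3, hc2 (h/2) ⟨h2pos, le_refl _⟩, neg_neg]
  have hg3 : gradient E θ = -k3 := by rw [hk3k2]; exact hg2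
  have hc3 := segment_gradient_const E hE U hU hcor θ k3 hg3 h (le_of_lt hh) hseg3
  have hk4k3 : k4 = k3 := by
    rw [hk4, hc3 h ⟨le_of_lt hh, le_refl _⟩, neg_neg]
  refine ⟨hk1, by rw [hk2k1]; exact hk1, by rw [hk3k2, hk2k1]; exact hk1,
    by rw [hk4k3, hk3k2, hk2k1]; exact hk1, ?_⟩
  rw [hk4k3, hk3k2, hk2k1, hk1]
  have h6 : h / 6 * 6 = h := by ring
  rw [sub_eq_add_neg, ← neg_smul]
  congr 1
  rw [show -(gradient E θ) + (2:ℝ) • -(gradient E θ) + (2:ℝ) • -(gradient E θ)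
      + -(gradient E θ) = (6:ℝ) • -(gradient E θ) by module]
  rw [smul_smul, h6, smul_neg, neg_smul]
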